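/- arXiv:1010.5405 — 2 statements merged into one kernel-verified Lean document; each statement's English description precedes it below -/
import Mathlib

section
/- Let μ(θ,κ) = M(θ)N(κ) be the equilibrium and L* the formal adjoint of L given by L*φ = −κ ∂_θ φ + λ sin θ ∂_κ φ + λ ∂_κ(κ φ) + α² ∂²_κ φ. Then L*(μ) = 0. -/
open Real

/-- Partial derivative in the first variable. -/
noncomputable def pTheta (f : ℝ → ℝ → ℝ) (θ κ : ℝ) : ℝ := deriv (fun t => f t κ) θ
/-- Partial derivative in the second variable. -/
noncomputable def pKappa (f : ℝ → ℝ → ℝ) (θ κ : ℝ) : ℝ := deriv (fun k => f θ k) κ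

/-- The formal adjoint L* φ = −κ ∂_θ φ + λ sin θ ∂_κ φ + λ ∂_κ(κ φ) + α² ∂²_κ φ. -/
noncomputable def Lstar (lam alpha : ℝ) (φ : ℝ → ℝ → ℝ) (θ κ : ℝ) : ℝ :=
  -κ * pTheta φ θ κ + lam * Real.sin θ * pKappa φ θ κ +
    lam * deriv (fun k => k * φ θ k) κ + alpha ^ 2 * deriv (deriv (fun k => φ θ k)) κ

theorem Lstar_mu_eq_zero (lam alpha : ℝ) (hlam : 0 < lam) (halpha : 0 < alpha)
    (M : ℝ → ℝ)
    (hM : ∀ θ, M θ = (2 * π * ((1 / π) *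
        ∫ t in (0:ℝ)..π, Real.exp ((lam ^ 2 / alpha ^ 2) * Real.cos t)))⁻¹ *
        Real.exp ((lam ^ 2 / alpha ^ 2) * Real.cos θ))
    (N : ℝ → ℝ)
    (hN : ∀ κ, N κ = Real.sqrt (lam / (2 * π * alpha ^ 2)) *
        Real.exp (-(lam * κ ^ 2) / (2 * alpha ^ 2)))
    (mu : ℝ → ℝ → ℝ) (hmu : ∀ θ κ, mu θ κ = M θ * N κ) :
    ∀ θ κ, Lstar lam alpha mu θ κ = 0 := by
  intro θ κ
  have hα : (alpha : ℝ) ≠ 0 := ne_of_gt halpha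
  set A : ℝ := (2 * π * ((1 / π) *
        ∫ t in (0:ℝ)..π, Real.exp ((lam ^ 2 / alpha ^ 2) * Real.cos t)))⁻¹ with hA
  set S : ℝ := Real.sqrt (lam / (2 * π * alpha ^ 2)) with hS
  set a : ℝ := lam ^ 2 / alpha ^ 2 with ha
  set b : ℝ := lam / (2 * alpha ^ 2) with hb
  have hmu' : mu = fun t k =>
      (A * Real.exp (a * Real.cos t)) * (S * Real.exp (-(b * k ^ 2))) := by
    funext t k
    rw [hmu, hM, hN, show -(lam * k ^ 2) / (2 * alpha ^ 2) = -(b * k ^ 2) from by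
      rw [hb]; ring]
  -- derivative of the angular factor
  have hE : HasDerivAt (fun x => Real.exp (a * Real.cos x))
      (Real.exp (a * Real.cos θ) * (a * -Real.sin θ)) θ :=
    ((Real.hasDerivAt_cos θ).const_mul a).exp
  -- derivative of the Gaussian factor
  have hGk : ∀ k : ℝ, HasDerivAt (fun x => Real.exp (-(b * x ^ 2)))
      (Real.exp (-(b * k ^ 2)) * -(b * ((2 : ℕ) * k ^ 1))) k :=
    fun k => (((hasDerivAt_pow 2 k).const_mul b).neg).exp
  set E : ℝ := Real.exp (a * Real.cos θ) with hEdef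
  -- θ-derivative of mu
  have hθ : HasDerivAt (fun t => (A * Real.exp (a * Real.cos t)) *
      (S * Real.exp (-(b * κ ^ 2))))
      (A * (E * (a * -Real.sin θ)) * (S * Real.exp (-(b * κ ^ 2)))) θ :=
    (hE.const_mul A).mul_const _
  -- κ-derivative of mu
  have hk : ∀ k : ℝ, HasDerivAt (fun x => (A * E) * (S * Real.exp (-(b * x ^ 2))))
      ((A * E) * (S * (Real.exp (-(b * k ^ 2)) * -(b * ((2 : ℕ) * k ^ 1))))) k :=
    fun k => ((hGk k).const_mul S).const_mul (A * E)
  have hprod : HasDerivAt (fun k => k * ((A * E) * (S * Real.exp (-(b * k ^ 2)))))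
      (1 * ((A * E) * (S * Real.exp (-(b * κ ^ 2)))) +
        κ * ((A * E) * (S * (Real.exp (-(b * κ ^ 2)) * -(b * ((2 : ℕ) * κ ^ 1)))))) κ :=
    (hasDerivAt_id' (x := κ)).mul (hk κ)
  have hd1 : deriv (fun k => (A * E) * (S * Real.exp (-(b * k ^ 2)))) =
      fun k => (A * E) * (S * (Real.exp (-(b * k ^ 2)) * -(b * (2 * k)))) := by
    funext k
    rw [(hk k).deriv]
    push_cast
    ring
  have hlin : HasDerivAt (fun k : ℝ => -(b * (2 * k))) (-(b * 2)) κ := by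
    have := ((hasDerivAt_id' (x := κ)).const_mul (2 : ℝ)).const_mul b
    simpa [Pi.neg_def] using this.neg
  have h2 : HasDerivAt (fun k => (A * E) * (S * (Real.exp (-(b * k ^ 2)) * -(b * (2 * k)))))
      ((A * E) * (S * ((Real.exp (-(b * κ ^ 2)) * -(b * ((2 : ℕ) * κ ^ 1))) * -(b * (2 * κ)) +
        Real.exp (-(b * κ ^ 2)) * -(b * 2)))) κ :=
    (((hGk κ).mul hlin).const_mul S).const_mul (A * E)
  simp only [Lstar, pTheta, pKappa, hmu']
  rw [hθ.deriv, hprod.deriv, hd1, h2.deriv]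
  simp only []
  push_cast
  rw [ha, hb]
  field_simp
  ring
end

section
/- Consider the one-dimensional reduction of the macroscopic system: ∂_t ρ + c₁ ∂_x(ρ cos θ) = 0, ∂_t θ + c₂ cos θ ∂_x θ − (α²/λ²)(sin θ / ρ) ∂_x ρ = 0. The 2×2 Jacobian matrix of this quasilinear system has real eigenvalues γ = ½[(c₁+c₂) cos θ ± √((c₁−c₂)² cos²θ + 4 c₁ (α²/λ²) sin²θ)]; in particular, the discriminant (c₁−c₂)² cos²θ + 4 c₁ (α²/λ²) sin²θ is nonnegative whenever c₁ ≥ 0, so the system is hyperbolic. -/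
open Real Matrix

theorem hyperbolicity (c1 c2 alpha lam rho θ : ℝ)
    (hc1 : 0 ≤ c1) (halpha : 0 < alpha) (hlam : 0 < lam) (hrho : 0 < rho)
    (A : Matrix (Fin 2) (Fin 2) ℝ)
    (hA : A = !![c1 * Real.cos θ, -c1 * rho * Real.sin θ;
                 -(alpha ^ 2 / lam ^ 2) * Real.sin θ / rho, c2 * Real.cos θ]) :
    0 ≤ (c1 - c2) ^ 2 * Real.cos θ ^ 2 +
        4 * c1 * (alpha ^ 2 / lam ^ 2) * Real.sin θ ^ 2 ∧
    ∀ s : ℝ, s = 1 ∨ s = -1 →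
      Matrix.det (A - ((1 / 2) * ((c1 + c2) * Real.cos θ +
          s * Real.sqrt ((c1 - c2) ^ 2 * Real.cos θ ^ 2 +
            4 * c1 * (alpha ^ 2 / lam ^ 2) * Real.sin θ ^ 2))) •
          (1 : Matrix (Fin 2) (Fin 2) ℝ)) = 0 := by
  have hD : 0 ≤ (c1 - c2) ^ 2 * Real.cos θ ^ 2 +
      4 * c1 * (alpha ^ 2 / lam ^ 2) * Real.sin θ ^ 2 := by
    have h1 : 0 ≤ alpha ^ 2 / lam ^ 2 := by positivity
    positivity
  refine ⟨hD, ?_⟩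
  intro s hs
  have hs2 : s ^ 2 = 1 := by rcases hs with h | h <;> rw [h] <;> norm_num
  have hsq := Real.sq_sqrt hD
  set r := Real.sqrt ((c1 - c2) ^ 2 * Real.cos θ ^ 2 +
      4 * c1 * (alpha ^ 2 / lam ^ 2) * Real.sin θ ^ 2) with hr
  subst hA
  have hrho' : rho ≠ 0 := ne_of_gt hrho
  rw [show ((1 : Matrix (Fin 2) (Fin 2) ℝ)) = !![1,0;0,1] from (by simp [Matrix.one_fin_two])]
  simp only [Matrix.smul_of, Matrix.smul_cons, Matrix.smul_empty, smul_eq_mul,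
    mul_one, mul_zero]
  rw [show (!![c1 * Real.cos θ, -c1 * rho * Real.sin θ;
      -(alpha ^ 2 / lam ^ 2) * Real.sin θ / rho, c2 * Real.cos θ] -
      !![1 / 2 * ((c1 + c2) * Real.cos θ + s * r), 0;
         0, 1 / 2 * ((c1 + c2) * Real.cos θ + s * r)]) =
      !![c1 * Real.cos θ - 1 / 2 * ((c1 + c2) * Real.cos θ + s * r),
         -c1 * rho * Real.sin θ;
         -(alpha ^ 2 / lam ^ 2) * Real.sin θ / rho,
         c2 * Real.cos θ - 1 / 2 * ((c1 + c2) * Real.cos θ + s * r)] from (by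
        ext i j; fin_cases i <;> fin_cases j <;> simp)]
  rw [Matrix.det_fin_two_of]
  have hsr2 : (s*r)^2 * lam^2 = (c1-c2)^2 * Real.cos θ^2 * lam^2
      + 4*c1*alpha^2*Real.sin θ^2 := by
    rw [mul_pow, hs2, one_mul, hsq]
    field_simp
  field_simp
  linear_combination hsr2
end
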